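/- Every nonzero eigenvalue of the adjacency matrix of a caterpillar graph is simple (has multiplicity 1). -/

import Mathlib

open Module

attribute [local instance] Classical.propDecidable

noncomputable def adjMat {V : Type*} [Fintype V] (G : SimpleGraph V) : Matrix V V ℝ :=
  Matrix.of fun u v => if G.Adj u v then 1 else 0

noncomputable def eigMult {V : Type*} [Fintype V] (G : SimpleGraph V) (μ : ℝ) : ℕ :=
  Module.finrank ℝ (Module.End.eigenspace (adjMat G).mulVecLin μ)

def HasEig {V : Type*} [Fintype V] (G : SimpleGraph V) (μ : ℝ) : Prop :=
  Module.End.HasEigenvalue (adjMat G).mulVecLin μ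

def IsMatchingSet {V : Type*} (G : SimpleGraph V) (M : Finset (Sym2 V)) : Prop :=
  (∀ e ∈ M, e ∈ G.edgeSet) ∧
  ∀ e ∈ M, ∀ f ∈ M, e ≠ f → ∀ v, v ∈ e → v ∉ f

def IsInducedMatchingSet {V : Type*} (G : SimpleGraph V) (M : Finset (Sym2 V)) : Prop :=
  IsMatchingSet G M ∧
  ∀ e ∈ M, ∀ f ∈ M, e ≠ f → ∀ u v, u ∈ e → v ∈ f → ¬ G.Adj u v

noncomputable def matchNum {V : Type*} [Fintype V] (G : SimpleGraph V) : ℕ :=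
  sSup {k | ∃ M, IsMatchingSet G M ∧ M.card = k}

noncomputable def indMatchNum {V : Type*} [Fintype V] (G : SimpleGraph V) : ℕ :=
  sSup {k | ∃ M, IsInducedMatchingSet G M ∧ M.card = k}

noncomputable def cyclomatic {V : Type*} [Fintype V] (G : SimpleGraph V) : ℕ :=
  G.edgeSet.ncard + 1 - Fintype.card V

def delV {V : Type*} (G : SimpleGraph V) (v : V) : SimpleGraph {u : V // u ≠ v} :=
  G.induce {u : V | u ≠ v}

def starGraph (n : ℕ) : SimpleGraph (Fin (n + 1)) :=
  SimpleGraph.fromRel (fun u _ => u = 0)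

def triStar (a : ℕ) : SimpleGraph (Fin 3 ⊕ Fin 3 × Fin a) :=
  SimpleGraph.fromRel (fun x y =>
    (∃ i j, x = Sum.inl i ∧ y = Sum.inl j) ∨
    (∃ i k, x = Sum.inl i ∧ y = Sum.inr (i, k)))

def spine {V : Type*} (G : SimpleGraph V) : Set V :=
  {v | ∃ u w, u ≠ w ∧ G.Adj v u ∧ G.Adj v w}

def IsCaterpillar {V : Type*} (G : SimpleGraph V) : Prop :=
  G.IsTree ∧ ∃ n, Nonempty ((G.induce (spine G)) ≃g SimpleGraph.pathGraph n)

set_option linter.unusedSectionVars false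

section Aux
variable {V : Type*} [Fintype V] {G : SimpleGraph V} {μ : ℝ}

lemma eig_eq {x : V → ℝ} (hx : x ∈ Module.End.eigenspace (adjMat G).mulVecLin μ)
    (v : V) : ∑ u ∈ Finset.univ.filter (fun u => G.Adj v u), x u = μ * x v := by
  rw [Module.End.mem_eigenspace_iff] at hx
  have h := congrFun hx v
  simp only [Matrix.mulVecLin_apply, Matrix.mulVec, dotProduct, adjMat,
    Matrix.of_apply, Pi.smul_apply, smul_eq_mul, ite_mul, one_mul, zero_mul] at h
  rw [Finset.sum_filter]
  exact h

lemma nonspine_unique {w a b : V} (hw : w ∉ spine G) (ha : G.Adj w a) (hb : G.Adj w b) :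
    a = b := by
  by_contra hne
  exact hw ⟨a, b, hne, ha, hb⟩

lemma eig_nonspine {x : V → ℝ} (hx : x ∈ Module.End.eigenspace (adjMat G).mulVecLin μ)
    {w a : V} (hw : w ∉ spine G) (ha : G.Adj w a) : x a = μ * x w := by
  have h := eig_eq hx w
  have hfilt : Finset.univ.filter (fun u => G.Adj w u) = {a} := by
    ext u
    simp only [Finset.mem_filter, Finset.mem_univ, true_and, Finset.mem_singleton]
    exact ⟨fun hu => (nonspine_unique hw hu ha), fun hu => hu ▸ ha⟩
  rw [hfilt, Finset.sum_singleton] at h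
  exact h

lemma walk_trap {S : Set V} (hS : ∀ a ∈ S, ∀ b, G.Adj a b → b ∈ S) {a b : V}
    (W : G.Walk a b) (ha : a ∈ S) : b ∈ S := by
  induction W with
  | nil => exact ha
  | cons h p ih => exact ih (hS _ ha _ h)

lemma comp_pair (hc : G.Connected) {u a : V} (hu : u ∉ spine G) (ha : a ∉ spine G)
    (hadj : G.Adj u a) : ∀ w : V, w = u ∨ w = a := by
  intro w
  have hS : ∀ b ∈ ({u, a} : Set V), ∀ c, G.Adj b c → c ∈ ({u, a} : Set V) := by
    rintro b (rfl | rfl) c hbc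
    · exact Or.inr ((nonspine_unique hu hbc hadj) )
    · exact Or.inl ((nonspine_unique ha hbc hadj.symm))
  obtain ⟨W⟩ := hc.preconnected u w
  exact walk_trap hS W (Or.inl rfl)

end Aux

section Key
variable {V : Type*} [Fintype V] {G : SimpleGraph V} {μ : ℝ}

lemma key_lemma (htree : G.IsTree) (hμ : μ ≠ 0) {n : ℕ}
    (e : (G.induce (spine G)) ≃g SimpleGraph.pathGraph n) :
    ∃ v₀ : V, ∀ x ∈ Module.End.eigenspace (adjMat G).mulVecLin μ, x v₀ = 0 → x = 0 := by
  rcases Nat.eq_zero_or_pos n with hn | hn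
  · -- empty spine
    subst hn
    have hempty : ∀ u : V, u ∉ spine G := fun u hu =>
      Fin.elim0 (e.toEquiv ⟨u, hu⟩)
    obtain ⟨v₀⟩ := htree.isConnected.nonempty
    refine ⟨v₀, fun x hx hx0 => ?_⟩
    funext w
    by_cases hadj : ∃ z, G.Adj v₀ z
    · obtain ⟨z, hz⟩ := hadj
      have hxz : x z = 0 := by
        have h1 : x v₀ = μ * x z := eig_nonspine hx (hempty z) hz.symm
        rw [hx0] at h1
        rcases mul_eq_zero.mp h1.symm with h | h
        · exact absurd h hμ
        · exact h
      rcases comp_pair htree.isConnected (hempty v₀) (hempty z) hz w with rfl | rfl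
      · exact hx0
      · exact hxz
    · have hS : ∀ a ∈ ({v₀} : Set V), ∀ b, G.Adj a b → b ∈ ({v₀} : Set V) := by
        rintro a rfl b hb
        exact absurd ⟨b, hb⟩ hadj
      obtain ⟨W⟩ := htree.isConnected.preconnected v₀ w
      have hw : w ∈ ({v₀} : Set V) := walk_trap hS W rfl
      rw [hw]
      exact hx0
  · -- nonempty spine
    set p : Fin n → V := fun i => (e.symm i : V) with hp
    have hp_spine : ∀ i, p i ∈ spine G := fun i => (e.symm i).2
    have hp_adj : ∀ i j : Fin n, G.Adj (p i) (p j) ↔ (SimpleGraph.pathGraph n).Adj i j := by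
      intro i j
      rw [← e.symm.map_adj_iff]
      simp [SimpleGraph.comap_adj, p]
    have hp_idx : ∀ u (hu : u ∈ spine G), p (e ⟨u, hu⟩) = u := by
      intro u hu
      simp [p]
    refine ⟨p ⟨0, hn⟩, fun x hx hx0 => ?_⟩
    have claim : ∀ k, ∀ hk : k < n, x (p ⟨k, hk⟩) = 0 := by
      intro k
      induction k using Nat.strong_induction_on with
      | _ k IH =>
        match k with
        | 0 => intro hk; exact hx0
        | (j+1) =>
          intro hk
          have hj : j < n := Nat.lt_of_succ_lt hk
          have hxj : x (p ⟨j, hj⟩) = 0 := IH j (Nat.lt_succ_self j) hj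
          have heq := eig_eq hx (p ⟨j, hj⟩)
          have hmem : p ⟨j+1, hk⟩ ∈ Finset.univ.filter (fun u => G.Adj (p ⟨j, hj⟩) u) := by
            simp only [Finset.mem_filter, Finset.mem_univ, true_and]
            rw [hp_adj, SimpleGraph.pathGraph_adj]
            left; rfl
          have hother : ∀ b ∈ Finset.univ.filter (fun u => G.Adj (p ⟨j, hj⟩) u),
              b ≠ p ⟨j+1, hk⟩ → x b = 0 := by
            intro b hb hbne
            rw [Finset.mem_filter] at hb
            have hadjb : G.Adj (p ⟨j, hj⟩) b := hb.2
            by_cases hbs : b ∈ spine G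
            · set i := e ⟨b, hbs⟩ with hi
              have hbi : p i = b := hp_idx b hbs
              have hpa : (SimpleGraph.pathGraph n).Adj ⟨j, hj⟩ i := by
                rw [← hp_adj, hbi]; exact hadjb
              rw [SimpleGraph.pathGraph_adj] at hpa
              rcases hpa with hpa | hpa
              · exfalso
                apply hbne
                rw [← hbi]
                congr 1
                exact (Fin.ext hpa.symm)
              · have hj' : (⟨j, hj⟩ : Fin n).val = j := rfl
                have hlt : (i : ℕ) < j + 1 := by omega
                have := IH i hlt i.isLt
                rw [← hbi]
                convert this using 2
            · have h1 : x (p ⟨j, hj⟩) = μ * x b := eig_nonspine hx hbs hadjb.symm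
              rw [hxj] at h1
              rcases mul_eq_zero.mp h1.symm with h | h
              · exact absurd h hμ
              · exact h
          rw [Finset.sum_eq_single_of_mem _ hmem hother, hxj, mul_zero] at heq
          exact heq
    funext w
    by_cases hw : w ∈ spine G
    · rw [← hp_idx w hw]
      have := claim (e ⟨w, hw⟩).val (e ⟨w, hw⟩).isLt
      convert this using 2
      rfl
    · by_cases hadj : ∃ a, G.Adj w a
      · obtain ⟨a, ha⟩ := hadj
        by_cases has : a ∈ spine G
        · have hxa : x a = 0 := by
            rw [← hp_idx a has]
            have := claim (e ⟨a, has⟩).val (e ⟨a, has⟩).isLt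
            convert this using 2
          have h1 : x a = μ * x w := eig_nonspine hx hw ha
          rw [hxa] at h1
          rcases mul_eq_zero.mp h1.symm with h | h
          · exact absurd h hμ
          · exact h
        · exfalso
          rcases comp_pair htree.isConnected hw has ha (p ⟨0, hn⟩) with h | h
          · exact hw (h ▸ hp_spine ⟨0, hn⟩)
          · exact has (h ▸ hp_spine ⟨0, hn⟩)
      · have heq := eig_eq hx w
        have hfe : Finset.univ.filter (fun u => G.Adj w u) = ∅ := by
          ext u
          simp only [Finset.mem_filter, Finset.mem_univ, true_and, Finset.notMem_empty,
            iff_false]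
          exact fun hu => hadj ⟨u, hu⟩
        rw [hfe, Finset.sum_empty] at heq
        rcases mul_eq_zero.mp heq.symm with h | h
        · exact absurd h hμ
        · exact h

end Key

theorem stmt5' {V : Type*} [Fintype V] (G : SimpleGraph V)
    (htree : G.IsTree) {n : ℕ} (e : (G.induce (spine G)) ≃g SimpleGraph.pathGraph n)
    (μ : ℝ) (hμ : μ ≠ 0) (h : Module.End.HasEigenvalue (adjMat G).mulVecLin μ) :
    Module.finrank ℝ (Module.End.eigenspace (adjMat G).mulVecLin μ) = 1 := by
  obtain ⟨v₀, hv₀⟩ := key_lemma htree hμ e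
  set E := Module.End.eigenspace (adjMat G).mulVecLin μ with hE
  have h1 : 0 < finrank ℝ E := by
    rw [Module.finrank_pos_iff, Submodule.nontrivial_iff_ne_bot]
    exact h
  let f : E →ₗ[ℝ] ℝ := (LinearMap.proj v₀ : (V → ℝ) →ₗ[ℝ] ℝ).comp E.subtype
  have hf : Function.Injective f := by
    rw [← LinearMap.ker_eq_bot, LinearMap.ker_eq_bot']
    intro y hy0
    have : (y : V → ℝ) = 0 := hv₀ y y.2 hy0
    exact Subtype.ext this
  have h2 := LinearMap.finrank_le_finrank_of_injective hf
  rw [Module.finrank_self] at h2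
  omega

theorem stmt5 {V : Type*} [Fintype V] (G : SimpleGraph V) (hG : IsCaterpillar G)
    (μ : ℝ) (hμ : μ ≠ 0) (h : HasEig G μ) : eigMult G μ = 1 := by
  obtain ⟨htree, n, ⟨e⟩⟩ := hG
  exact stmt5' G htree e μ hμ h
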